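/- arXiv:2310.08356 — 3 statements merged into one kernel-verified Lean document; each statement's English description precedes it below -/
import Mathlib

section
/- Let A₀ be a symmetric positive definite p×p matrix, f' a p×p matrix with A₀·f' symmetric, and M'₁,…,M'ₖ p×p matrices with each A₀·M'ᵢ symmetric positive definite and ∑ᵢ M'ᵢ = I. Let a₁,…,aₖ be reals with minᵢ|aᵢ| > ρ(f'). Then the matrix K = A₀·(∑ᵢ aᵢ²·M'ᵢ − (f')²) is symmetric positive definite. -/
open Matrix


private lemma aux_smul_psd {p : ℕ} {c : ℝ} (hc : 0 ≤ c) {M : Matrix (Fin p) (Fin p) ℝ}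
    (hM : M.PosSemidef) : (c • M).PosSemidef := by
  refine posSemidef_iff_dotProduct_mulVec.mpr ⟨?_, fun x => ?_⟩
  · unfold Matrix.IsHermitian
    rw [conjTranspose_smul, hM.1]
    simp
  · rw [smul_mulVec, dotProduct_smul, smul_eq_mul]
    exact mul_nonneg hc (hM.dotProduct_mulVec_nonneg x)

private lemma aux_smul_pd {p : ℕ} {c : ℝ} (hc : 0 < c) {M : Matrix (Fin p) (Fin p) ℝ}
    (hM : M.PosDef) : (c • M).PosDef := by
  refine posDef_iff_dotProduct_mulVec.mpr ⟨(aux_smul_psd hc.le hM.posSemidef).1, fun x hx => ?_⟩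
  rw [smul_mulVec, dotProduct_smul, smul_eq_mul]
  exact mul_pos hc (hM.dotProduct_mulVec_pos hx)

private lemma aux_sum_psd {p k : ℕ} (f : Fin k → Matrix (Fin p) (Fin p) ℝ)
    (hf : ∀ i, (f i).PosSemidef) : (∑ i, f i).PosSemidef :=
  Finset.sum_induction f _ (fun _ _ ha hb => ha.add hb) Matrix.PosSemidef.zero
    (fun i _ => hf i)

open scoped MatrixOrder in
private lemma aux_core {p : ℕ} {A₀ f' : Matrix (Fin p) (Fin p) ℝ}
    (hA : A₀.PosDef) (hAf : (A₀ * f').IsSymm) {r : ℝ}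
    (hr : ∀ μ ∈ spectrum ℝ f', |μ| ≤ r) :
    (r ^ 2 • A₀ - A₀ * f' ^ 2).PosSemidef := by
  classical
  set S := CFC.sqrt A₀ with hSdef
  have hSps : S.PosSemidef := (CFC.sqrt_nonneg A₀).posSemidef
  have hSS : S * S = A₀ := CFC.sqrt_mul_sqrt_self A₀ hA.posSemidef.nonneg
  have hdet : IsUnit S.det := by
    have h2 : S.det * S.det = A₀.det := by rw [← det_mul, hSS]
    have : IsUnit (S.det * S.det) := h2 ▸ hA.det_pos.ne'.isUnit
    exact isUnit_of_mul_isUnit_left this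
  have hSu : IsUnit S := (Matrix.isUnit_iff_isUnit_det S).mpr hdet
  have hSinv : S * S⁻¹ = 1 := Matrix.mul_nonsing_inv S hdet
  have hinvS : S⁻¹ * S = 1 := Matrix.nonsing_inv_mul S hdet
  have hA₀h : A₀ᵀ = A₀ := hA.isHermitian
  have hSh : Sᵀ = S := hSps.isHermitian
  have hSinvh : (S⁻¹)ᵀ = S⁻¹ := by rw [Matrix.transpose_nonsing_inv, hSh]
  -- f'ᵀ * A₀ = A₀ * f'
  have h1 : f'ᵀ * A₀ = A₀ * f' := by
    have := hAf.eq   -- (A₀ * f')ᵀ = A₀ * f'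
    rwa [Matrix.transpose_mul, hA₀h] at this
  set B := S * f' * S⁻¹ with hBdef
  have hB : B.IsHermitian := by
    show Bᴴ = B
    rw [Matrix.conjTranspose_eq_transpose_of_trivial]
    have key : S * ((S * f' * S⁻¹)ᵀ) * S = S * (S * f' * S⁻¹) * S := by
      rw [Matrix.transpose_mul, Matrix.transpose_mul, hSinvh, hSh]
      calc S * (S⁻¹ * (f'ᵀ * S)) * S = (S * S⁻¹) * (f'ᵀ * (S * S)) := by
            simp only [Matrix.mul_assoc]
        _ = f'ᵀ * A₀ := by rw [hSinv, hSS, Matrix.one_mul]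
        _ = A₀ * f' := h1
        _ = (S * S) * f' * (S⁻¹ * S) := by rw [hinvS, hSS, Matrix.mul_one]
        _ = S * (S * f' * S⁻¹) * S := by simp only [Matrix.mul_assoc]
    have h3 := hSu.mul_left_cancel (hSu.mul_right_cancel key)
    exact h3
  -- eigenvalues of B are bounded by r
  have hBconj : B = (hSu.unit : Matrix (Fin p) (Fin p) ℝ) * f' *
      ((hSu.unit⁻¹ : (Matrix (Fin p) (Fin p) ℝ)ˣ) : Matrix (Fin p) (Fin p) ℝ) := by
    rw [Matrix.coe_units_inv, IsUnit.unit_spec]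
  have hspecB : spectrum ℝ B = spectrum ℝ f' := by
    rw [hBconj]; exact spectrum.units_conjugate
  have hev : ∀ i, |hB.eigenvalues i| ≤ r := fun i =>
    hr _ (hspecB ▸ hB.eigenvalues_mem_spectrum_real i)
  set U : Matrix (Fin p) (Fin p) ℝ := ↑(hB.eigenvectorUnitary) with hUdef
  have hUU : star U * U = 1 := Unitary.coe_star_mul_self _
  have hUU' : U * star U = 1 := Unitary.coe_mul_star_self _
  set ev : Fin p → ℝ := hB.eigenvalues with hevdef
  have hspec : B = U * diagonal ev * star U := by
    have := hB.spectral_theorem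
    rwa [show (RCLike.ofReal ∘ hB.eigenvalues : Fin p → ℝ) = ev by
      funext i; simp [hevdef]] at this
  have hBB : r ^ 2 • (1 : Matrix (Fin p) (Fin p) ℝ) - B * B
      = U * diagonal (fun i => r ^ 2 - ev i ^ 2) * star U := by
    have hB2 : B * B = U * diagonal (fun i => ev i ^ 2) * star U := by
      calc B * B = (U * diagonal ev * star U) * (U * diagonal ev * star U) := by rw [← hspec]
        _ = U * (diagonal ev * (star U * U) * diagonal ev) * star U := by
            simp only [Matrix.mul_assoc]
        _ = U * (diagonal ev * diagonal ev) * star U := by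
            rw [hUU, Matrix.mul_one]
        _ = U * diagonal (fun i => ev i ^ 2) * star U := by
            rw [diagonal_mul_diagonal]
            congr 1
            · congr 1; funext i; ring
    have hOne : r ^ 2 • (1 : Matrix (Fin p) (Fin p) ℝ)
        = U * (r ^ 2 • (1 : Matrix (Fin p) (Fin p) ℝ)) * star U := by
      rw [Matrix.mul_smul, Matrix.mul_one, Matrix.smul_mul, hUU']
    rw [hB2, hOne, ← Matrix.sub_mul, ← Matrix.mul_sub]
    congr 2
    rw [smul_one_eq_diagonal, diagonal_sub]
  have hpsd1 : (r ^ 2 • (1 : Matrix (Fin p) (Fin p) ℝ) - B * B).PosSemidef := by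
    rw [hBB, Matrix.star_eq_conjTranspose U]
    refine Matrix.PosSemidef.mul_mul_conjTranspose_same ?_ U
    refine posSemidef_diagonal_iff.mpr fun i => ?_
    have h4 : (ev i) ^ 2 ≤ r ^ 2 := by
      have := pow_le_pow_left₀ (abs_nonneg (ev i)) (hev i) 2
      rwa [sq_abs] at this
    linarith
  -- transport back through S
  have hfinal : r ^ 2 • A₀ - A₀ * f' ^ 2
      = S * (r ^ 2 • (1 : Matrix (Fin p) (Fin p) ℝ) - B * B) * Sᴴ := by
    have hSH : Sᴴ = S := by
      rw [Matrix.conjTranspose_eq_transpose_of_trivial, hSh]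
    rw [hSH]
    have hSB : S * B = (S * S) * f' * S⁻¹ := by
      rw [hBdef]; simp only [Matrix.mul_assoc]
    have hBS : B * S = S * f' := by
      rw [hBdef, Matrix.nonsing_inv_mul_cancel_right _ _ hdet]
    calc r ^ 2 • A₀ - A₀ * f' ^ 2
        = r ^ 2 • (S * 1 * S) - (S * B) * (B * S) := by
          rw [Matrix.mul_one, hSS, hSB, hBS]
          congr 1
          rw [pow_two]
          symm
          calc S * S * f' * S⁻¹ * (S * f')
              = S * S * f' * (S⁻¹ * S) * f' := by simp only [Matrix.mul_assoc]
            _ = A₀ * (f' * f') := by rw [hinvS, Matrix.mul_one, hSS, Matrix.mul_assoc]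
      _ = S * (r ^ 2 • (1 : Matrix (Fin p) (Fin p) ℝ)) * S - S * (B * B) * S := by
          rw [Matrix.mul_smul, Matrix.smul_mul]
          simp only [Matrix.mul_assoc]
      _ = S * (r ^ 2 • (1 : Matrix (Fin p) (Fin p) ℝ) - B * B) * S := by
          rw [Matrix.mul_sub, Matrix.sub_mul]
  rw [hfinal]
  exact hpsd1.mul_mul_conjTranspose_same S

private lemma aux_spec {p : ℕ} (f' : Matrix (Fin p) (Fin p) ℝ) {μ : ℝ}
    (hμ : μ ∈ spectrum ℝ f') :
    |μ| ≤ (spectralRadius ℂ (f'.map (algebraMap ℝ ℂ))).toReal := by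
  classical
  set F := f'.map (algebraMap ℝ ℂ) with hF
  have hμC : (μ : ℂ) ∈ spectrum ℂ F := by
    rw [spectrum.mem_iff] at hμ ⊢
    intro hcon
    apply hμ
    rw [Matrix.isUnit_iff_isUnit_det] at hcon ⊢
    have hmap : (algebraMap ℝ (Matrix (Fin p) (Fin p) ℝ) μ - f').map (algebraMap ℝ ℂ)
        = algebraMap ℂ (Matrix (Fin p) (Fin p) ℂ) (μ : ℂ) - F := by
      rw [Matrix.map_sub _ (fun a b => map_sub _ a b)]
      congr 1
      rw [Matrix.map_algebraMap _ _ (map_zero _) rfl]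
      exact (IsScalarTower.algebraMap_apply ℝ ℂ (Matrix (Fin p) (Fin p) ℂ) μ).symm
    have hdet : ((algebraMap ℂ (Matrix (Fin p) (Fin p) ℂ) (μ : ℂ) - F)).det
        = algebraMap ℝ ℂ ((algebraMap ℝ (Matrix (Fin p) (Fin p) ℝ) μ - f').det) := by
      rw [← hmap, ← RingHom.mapMatrix_apply, ← RingHom.map_det]
    rw [hdet] at hcon
    have : ((algebraMap ℝ (Matrix (Fin p) (Fin p) ℝ) μ - f').det : ℂ) ≠ 0 :=
      hcon.ne_zero
    have h0 : (algebraMap ℝ (Matrix (Fin p) (Fin p) ℝ) μ - f').det ≠ 0 := by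
      simpa using this
    exact h0.isUnit
  have h5 : (‖(μ : ℂ)‖₊ : ENNReal) ≤ spectralRadius ℂ F :=
    le_iSup₂ (f := fun k (_ : k ∈ spectrum ℂ F) => (‖k‖₊ : ENNReal)) _ hμC
  have hfin : spectralRadius ℂ F ≠ ⊤ := by
    have hfs := Matrix.finite_spectrum F
    have hle : spectralRadius ℂ F ≤ hfs.toFinset.sup (fun k => (‖k‖₊ : ENNReal)) :=
      iSup₂_le fun k hk => Finset.le_sup (f := fun k => (‖k‖₊ : ENNReal)) (hfs.mem_toFinset.mpr hk)
    refine ne_top_of_le_ne_top ?_ hle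
    refine (Finset.sup_lt_iff (by simp)).mpr (fun k _ => ENNReal.coe_lt_top) |>.ne
  have h6 := ENNReal.toReal_mono hfin h5
  rwa [ENNReal.coe_toReal, coe_nnnorm, Complex.norm_real, Real.norm_eq_abs] at h6

/-- Proposition 1: with `A₀` symmetric positive definite, `A₀ * f'` symmetric,
monotone Maxwellians (`A₀ * M' i` symmetric positive definite, `∑ i, M' i = I`),
and the sub-characteristic condition `ρ(f') < minᵢ |aᵢ|`, the matrix
`K = A₀ * (∑ᵢ aᵢ² • M'ᵢ - (f')²)` is symmetric positive definite. -/
theorem stmt4 (p k : ℕ) (A₀ f' : Matrix (Fin p) (Fin p) ℝ)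
    (M' : Fin k → Matrix (Fin p) (Fin p) ℝ) (a : Fin k → ℝ)
    (hA : A₀.PosDef) (hAf : (A₀ * f').IsSymm)
    (hM : ∀ i, (A₀ * M' i).PosDef)
    (hsum : ∑ i, M' i = 1)
    (hsub : ∀ i, (spectralRadius ℂ (f'.map (algebraMap ℝ ℂ))).toReal < |a i|) :
    (A₀ * (∑ i, (a i) ^ 2 • M' i - f' ^ 2)).PosDef := by
  classical
  rcases Nat.eq_zero_or_pos p with hp | hp
  · subst hp
    refine ⟨?_, fun x hx => ?_⟩
    · ext i j
      exact i.elim0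
    · exact absurd (Finsupp.ext fun i => i.elim0) hx
  rcases Nat.eq_zero_or_pos k with hk | hk
  · exfalso
    subst hk
    have i : Fin p := ⟨0, hp⟩
    have h0 := congrFun (congrFun hsum i) i
    simp [Matrix.one_apply] at h0
  set r := (spectralRadius ℂ (f'.map (algebraMap ℝ ℂ))).toReal with hrdef
  have hr0 : 0 ≤ r := ENNReal.toReal_nonneg
  have hrs : ∀ i, r ^ 2 < a i ^ 2 := fun i => by
    have h := hsub i
    have h2 : r ^ 2 < |a i| ^ 2 := by
      exact pow_lt_pow_left₀ h hr0 two_ne_zero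
    rwa [sq_abs] at h2
  have hcore : (r ^ 2 • A₀ - A₀ * f' ^ 2).PosSemidef :=
    aux_core hA hAf (fun μ hμ => aux_spec f' hμ)
  have hsumA : ∑ i, A₀ * M' i = A₀ := by
    rw [← Finset.mul_sum, hsum, Matrix.mul_one]
  have hdecomp : A₀ * (∑ i, (a i) ^ 2 • M' i - f' ^ 2)
      = (∑ i, ((a i) ^ 2 - r ^ 2) • (A₀ * M' i)) + (r ^ 2 • A₀ - A₀ * f' ^ 2) := by
    rw [Matrix.mul_sub, Finset.mul_sum]
    simp only [Matrix.mul_smul, sub_smul, Finset.sum_sub_distrib, ← Finset.smul_sum, hsumA]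
    abel
  rw [hdecomp]
  refine Matrix.PosDef.add_posSemidef ?_ hcore
  obtain ⟨k', rfl⟩ : ∃ k', k = k' + 1 := ⟨k - 1, (Nat.succ_pred_eq_of_pos hk).symm⟩
  rw [Fin.sum_univ_succ]
  refine Matrix.PosDef.add_posSemidef ?_ ?_
  · exact aux_smul_pd (by have := hrs 0; linarith) (hM 0)
  · exact aux_sum_psd _ fun i =>
      aux_smul_psd (by have := hrs i.succ; linarith) (hM _).posSemidef
end

section
/- Under the hypotheses of Proposition 1 (A₀ symmetric positive definite, A₀·f' symmetric, each A₀·M'ᵢ symmetric positive definite with ∑ᵢ M'ᵢ = I, and minᵢ|aᵢ| > ρ(f')), the matrix m₂' − (f')², where m₂' = ∑ᵢ aᵢ²·M'ᵢ, has real strictly positive eigenvalues and is invertible. -/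
open Matrix

section Aux

variable {p : ℕ}

private lemma sumMulVec {ι : Type*} (s : Finset ι) (A : ι → Matrix (Fin p) (Fin p) ℝ)
    (x : Fin p → ℝ) : (∑ i ∈ s, A i) *ᵥ x = ∑ i ∈ s, A i *ᵥ x := by
  ext j
  simp only [Matrix.mulVec, dotProduct, Finset.sum_apply, Matrix.sum_apply,
    Finset.sum_mul]
  rw [Finset.sum_comm]

private lemma dotProductSum {ι : Type*} (s : Finset ι) (z : Fin p → ℝ)
    (w : ι → Fin p → ℝ) : z ⬝ᵥ (∑ i ∈ s, w i) = ∑ i ∈ s, z ⬝ᵥ w i := by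
  simp only [dotProduct, Finset.sum_apply, Finset.mul_sum]
  rw [Finset.sum_comm]

/-- quadratic form of the complexification of a real positive definite matrix -/
private lemma auxPos {M : Matrix (Fin p) (Fin p) ℝ} (hM : M.PosDef)
    (v : Fin p → ℂ) (hv : v ≠ 0) :
    (star v ⬝ᵥ (M.map (algebraMap ℝ ℂ)) *ᵥ v).im = 0 ∧
      0 < (star v ⬝ᵥ (M.map (algebraMap ℝ ℂ)) *ᵥ v).re := by
  classical
  set x : Fin p → ℝ := fun i => (v i).re with hx
  set y : Fin p → ℝ := fun i => (v i).im with hy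
  have hsymm : ∀ i j, M i j = M j i := by
    intro i j
    conv_lhs => rw [← hM.1]
    simp [Matrix.conjTranspose_apply]
  have hexp : star v ⬝ᵥ (M.map (algebraMap ℝ ℂ)) *ᵥ v =
      ∑ i, ∑ j, ((starRingEnd ℂ) (v i) * ((M i j : ℝ) * v j : ℂ)) := by
    simp [dotProduct, Matrix.mulVec, Matrix.map_apply, Finset.mul_sum,
      Complex.coe_algebraMap]
  have him : (star v ⬝ᵥ (M.map (algebraMap ℝ ℂ)) *ᵥ v).im = 0 := by
    rw [hexp, Complex.im_sum]
    simp only [Complex.im_sum]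
    have hterm : ∀ i j : Fin p, ((starRingEnd ℂ) (v i) * ((M i j : ℝ) * v j : ℂ)).im
        = M i j * (x i * y j) - M i j * (y i * x j) := by
      intro i j
      simp only [Complex.mul_im, Complex.mul_re, Complex.ofReal_re, Complex.ofReal_im,
        Complex.conj_re, Complex.conj_im, hx, hy]
      ring
    simp only [hterm, Finset.sum_sub_distrib]
    have hswap : ∑ i, ∑ j, M i j * (y i * x j) = ∑ i, ∑ j, M i j * (x i * y j) := by
      rw [Finset.sum_comm]
      refine Finset.sum_congr rfl fun i _ => Finset.sum_congr rfl fun j _ => ?_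
      rw [hsymm]; ring
    rw [hswap, sub_self]
  refine ⟨him, ?_⟩
  have hre : (star v ⬝ᵥ (M.map (algebraMap ℝ ℂ)) *ᵥ v).re
      = x ⬝ᵥ M *ᵥ x + y ⬝ᵥ M *ᵥ y := by
    rw [hexp, Complex.re_sum]
    simp only [Complex.re_sum]
    have hterm : ∀ i j : Fin p, ((starRingEnd ℂ) (v i) * ((M i j : ℝ) * v j : ℂ)).re
        = M i j * (x i * x j) + M i j * (y i * y j) := by
      intro i j
      simp only [Complex.mul_im, Complex.mul_re, Complex.ofReal_re, Complex.ofReal_im,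
        Complex.conj_re, Complex.conj_im, hx, hy]
      ring
    simp only [hterm]
    have hq : ∀ z : Fin p → ℝ, z ⬝ᵥ M *ᵥ z = ∑ i, ∑ j, M i j * (z i * z j) := by
      intro z
      simp only [dotProduct, Matrix.mulVec, Finset.mul_sum]
      refine Finset.sum_congr rfl fun i _ => Finset.sum_congr rfl fun j _ => by ring
    rw [hq, hq, ← Finset.sum_add_distrib]
    refine Finset.sum_congr rfl fun i _ => ?_
    rw [← Finset.sum_add_distrib]
  rw [hre]
  have hxy : x ≠ 0 ∨ y ≠ 0 := by
    by_contra h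
    push_neg at h
    apply hv
    funext i
    have h1 : x i = 0 := by rw [h.1]; rfl
    have h2 : y i = 0 := by rw [h.2]; rfl
    exact Complex.ext h1 h2
  have hsx : ∀ z : Fin p → ℝ, star z ⬝ᵥ M *ᵥ z = z ⬝ᵥ M *ᵥ z := by
    intro z; rw [star_trivial]
  rcases hxy with h | h
  · have := hM.dotProduct_mulVec_pos h
    rw [hsx] at this
    have h2 := hM.posSemidef.dotProduct_mulVec_nonneg y
    rw [hsx] at h2
    linarith
  · have := hM.dotProduct_mulVec_pos h
    rw [hsx] at this
    have h2 := hM.posSemidef.dotProduct_mulVec_nonneg x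
    rw [hsx] at h2
    linarith

end Aux

set_option maxHeartbeats 2000000 in
/-- Corollary to Proposition 1: under the same hypotheses, the matrix
`m₂' - (f')²` with `m₂' = ∑ᵢ aᵢ² • M'ᵢ` has real strictly positive eigenvalues
and is invertible. -/
theorem stmt5 (p k : ℕ) (A₀ f' : Matrix (Fin p) (Fin p) ℝ)
    (M' : Fin k → Matrix (Fin p) (Fin p) ℝ) (a : Fin k → ℝ)
    (hA : A₀.PosDef) (hAf : (A₀ * f').IsSymm)
    (hM : ∀ i, (A₀ * M' i).PosDef)
    (hsum : ∑ i, M' i = 1)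
    (hsub : ∀ i, (spectralRadius ℂ (f'.map (algebraMap ℝ ℂ))).toReal < |a i|) :
    (∀ μ ∈ spectrum ℂ ((∑ i, (a i) ^ 2 • M' i - f' ^ 2).map (algebraMap ℝ ℂ)),
        μ.im = 0 ∧ 0 < μ.re) ∧
    IsUnit (∑ i, (a i) ^ 2 • M' i - f' ^ 2) := by
  classical
  set S : Matrix (Fin p) (Fin p) ℝ := ∑ i, (a i) ^ 2 • M' i - f' ^ 2 with hS
  clear_value S
  rcases Nat.eq_zero_or_pos p with hp | hp
  · subst hp
    have hsub0 : Subsingleton (Matrix (Fin 0) (Fin 0) ℂ) :=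
      ⟨fun A B => by ext i; exact i.elim0⟩
    have hsub1 : Subsingleton (Matrix (Fin 0) (Fin 0) ℝ) :=
      ⟨fun A B => by ext i; exact i.elim0⟩
    exact ⟨fun μ hμ => absurd (isUnit_of_subsingleton _) (spectrum.mem_iff.mp hμ),
      isUnit_of_subsingleton _⟩
  have hk : Nonempty (Fin k) := by
    by_contra h
    rw [not_nonempty_iff] at h
    have h0 : (∑ i, M' i) = 0 := by simp [Finset.univ_eq_empty]
    rw [hsum] at h0
    have h1 := congrFun (congrFun h0 ⟨0, hp⟩) ⟨0, hp⟩
    simp [Matrix.one_apply] at h1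
  haveI := hk
  -- basic symmetry facts
  have hAt : A₀ᵀ = A₀ := by
    have h : A₀ᴴ = A₀ := hA.1
    rwa [Matrix.conjTranspose_eq_transpose_of_trivial] at h
  have hAfe : (A₀ * f')ᵀ = A₀ * f' := hAf
  have hfA : f'ᵀ * A₀ = A₀ * f' := by
    rw [Matrix.transpose_mul, hAt] at hAfe
    exact hAfe
  -- square root of A₀
  open scoped MatrixOrder in
  set B := CFC.sqrt A₀ with hB
  open scoped MatrixOrder in
  have hBP : B.PosSemidef := (CFC.sqrt_nonneg A₀).posSemidef
  open scoped MatrixOrder in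
  have hBB : B * B = A₀ := CFC.sqrt_mul_sqrt_self A₀ hA.posSemidef.nonneg
  have hBt : Bᵀ = B := by
    have h : Bᴴ = B := hBP.1
    rwa [Matrix.conjTranspose_eq_transpose_of_trivial] at h
  have hBdet : IsUnit B.det := by
    have h1 : B.det * B.det = A₀.det := by rw [← Matrix.det_mul, hBB]
    have h2 := hA.det_pos
    refine isUnit_iff_ne_zero.mpr fun h => ?_
    rw [h, mul_zero] at h1
    rw [← h1] at h2
    exact lt_irrefl _ h2
  have hBiB : B⁻¹ * B = 1 := Matrix.nonsing_inv_mul B hBdet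
  have hBBi : B * B⁻¹ = 1 := Matrix.mul_nonsing_inv B hBdet
  have hBit : B⁻¹ᵀ = B⁻¹ := by rw [Matrix.transpose_nonsing_inv, hBt]
  clear_value B
  set G : Matrix (Fin p) (Fin p) ℝ := B⁻¹ * (A₀ * f') * B⁻¹ with hGdef
  have hGH : G.IsHermitian := by
    show Gᴴ = G
    rw [Matrix.conjTranspose_eq_transpose_of_trivial, hGdef,
      Matrix.transpose_mul, Matrix.transpose_mul, hBit, hAfe]
    exact (Matrix.mul_assoc _ _ _).symm
  have hGalt : G = B * f' * B⁻¹ := by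
    calc B⁻¹ * (A₀ * f') * B⁻¹ = B⁻¹ * (B * B * f') * B⁻¹ := by rw [hBB]
      _ = (B⁻¹ * B) * (B * (f' * B⁻¹)) := by simp only [Matrix.mul_assoc]
      _ = B * (f' * B⁻¹) := by rw [hBiB, Matrix.one_mul]
      _ = B * f' * B⁻¹ := (Matrix.mul_assoc _ _ _).symm
  have hGB : G * B = B * f' := by
    rw [hGalt, Matrix.mul_assoc, hBiB, Matrix.mul_one]
  clear_value G
  -- complexification
  have hmapmul : ∀ X Y : Matrix (Fin p) (Fin p) ℝ, (X * Y).map (algebraMap ℝ ℂ)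
      = X.map (algebraMap ℝ ℂ) * Y.map (algebraMap ℝ ℂ) := fun X Y =>
    Matrix.map_mul
  have hmapone : (1 : Matrix (Fin p) (Fin p) ℝ).map (algebraMap ℝ ℂ) = 1 := by
    ext i j
    by_cases h : i = j <;> simp [Matrix.map_apply, Matrix.one_apply, h]
  have hBcinv : B.map (algebraMap ℝ ℂ) * (B⁻¹).map (algebraMap ℝ ℂ) = 1 := by
    rw [← hmapmul, hBBi, hmapone]
  have hBcinv' : (B⁻¹).map (algebraMap ℝ ℂ) * B.map (algebraMap ℝ ℂ) = 1 := by
    rw [← hmapmul, hBiB, hmapone]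
  set u : (Matrix (Fin p) (Fin p) ℂ)ˣ :=
    ⟨B.map (algebraMap ℝ ℂ), (B⁻¹).map (algebraMap ℝ ℂ), hBcinv, hBcinv'⟩ with hu
  have hspeceq : spectrum ℂ (G.map (algebraMap ℝ ℂ)) = spectrum ℂ (f'.map (algebraMap ℝ ℂ)) := by
    have h : G.map (algebraMap ℝ ℂ) = (u : Matrix (Fin p) (Fin p) ℂ) *
        f'.map (algebraMap ℝ ℂ) * ((u⁻¹ : (Matrix (Fin p) (Fin p) ℂ)ˣ) :
          Matrix (Fin p) (Fin p) ℂ) := by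
      show _ = B.map (algebraMap ℝ ℂ) * f'.map (algebraMap ℝ ℂ) * (B⁻¹).map (algebraMap ℝ ℂ)
      rw [hGalt, hmapmul, hmapmul]
    rw [h, spectrum.units_conjugate]
  set r : ℝ := (spectralRadius ℂ (f'.map (algebraMap ℝ ℂ))).toReal with hr
  have hr0 : 0 ≤ r := ENNReal.toReal_nonneg
  have hfin := Matrix.finite_spectrum (R := ℂ) (f'.map (algebraMap ℝ ℂ))
  have hrtop : spectralRadius ℂ (f'.map (algebraMap ℝ ℂ)) ≠ ⊤ := by
    have hle : spectralRadius ℂ (f'.map (algebraMap ℝ ℂ))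
        ≤ ((hfin.toFinset.sup fun z => ‖z‖₊ : NNReal) : ENNReal) := by
      rw [spectralRadius]
      refine iSup₂_le fun z hz => ?_
      exact ENNReal.coe_le_coe.2 (Finset.le_sup (hfin.mem_toFinset.2 hz))
    exact ne_top_of_le_ne_top ENNReal.coe_ne_top hle
  have hnormle : ∀ z ∈ spectrum ℂ (f'.map (algebraMap ℝ ℂ)), ‖z‖ ≤ r := by
    intro z hz
    have h1 : ((‖z‖₊ : NNReal) : ENNReal) ≤ spectralRadius ℂ (f'.map (algebraMap ℝ ℂ)) :=
      le_iSup₂ (f := fun k (_ : k ∈ spectrum ℂ (f'.map (algebraMap ℝ ℂ))) =>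
        ((‖k‖₊ : NNReal) : ENNReal)) z hz
    have h2 := ENNReal.toReal_mono hrtop h1
    simpa [hr] using h2
  -- eigenvalues of G are bounded by r
  have hev : ∀ i, |hGH.eigenvalues i| ≤ r := by
    intro i
    have h1 : hGH.eigenvalues i ∈ spectrum ℝ G := hGH.eigenvalues_mem_spectrum_real i
    have h2 : ((hGH.eigenvalues i : ℝ) : ℂ) ∈ spectrum ℂ (G.map (algebraMap ℝ ℂ)) := by
      rw [spectrum.mem_iff] at h1 ⊢
      intro hu'
      apply h1
      rw [Matrix.isUnit_iff_isUnit_det, isUnit_iff_ne_zero] at hu' ⊢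
      intro h0
      apply hu'
      have hmap : (algebraMap ℂ (Matrix (Fin p) (Fin p) ℂ)) ((hGH.eigenvalues i : ℝ) : ℂ)
            - G.map (algebraMap ℝ ℂ)
          = ((algebraMap ℝ (Matrix (Fin p) (Fin p) ℝ) (hGH.eigenvalues i) - G)).map
            (algebraMap ℝ ℂ) := by
        ext i' j'
        by_cases h : i' = j' <;>
          simp [Matrix.map_apply, Matrix.algebraMap_matrix_apply, h]
      rw [hmap, ← RingHom.mapMatrix_apply, ← RingHom.map_det, h0, map_zero]
    rw [hspeceq] at h2
    have h3 := hnormle _ h2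
    simpa using h3
  -- the operator norm bound for G
  have hUU : (hGH.eigenvectorUnitary : Matrix (Fin p) (Fin p) ℝ)
      * star (hGH.eigenvectorUnitary : Matrix (Fin p) (Fin p) ℝ) = 1 :=
    Matrix.mem_unitaryGroup_iff.mp hGH.eigenvectorUnitary.2
  have hUU' : star (hGH.eigenvectorUnitary : Matrix (Fin p) (Fin p) ℝ)
      * (hGH.eigenvectorUnitary : Matrix (Fin p) (Fin p) ℝ) = 1 :=
    Matrix.mem_unitaryGroup_iff'.mp hGH.eigenvectorUnitary.2
  have hPsd : (r ^ 2 • (1 : Matrix (Fin p) (Fin p) ℝ) - G * G).PosSemidef := by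
    set U := (hGH.eigenvectorUnitary : Matrix (Fin p) (Fin p) ℝ) with hU
    set V := star U with hV
    set D := Matrix.diagonal ((RCLike.ofReal ∘ hGH.eigenvalues : Fin p → ℝ)) with hD
    have hGU : G = U * D * V := hGH.spectral_theorem
    have hDD' : D = Matrix.diagonal ((RCLike.ofReal ∘ hGH.eigenvalues : Fin p → ℝ)) := hD
    clear_value U V D
    have h1 : G * G = U * (D * D) * V := by
      rw [hGU]
      calc (U * D * V) * (U * D * V) = ((U * D) * ((V * U) * D)) * V := by
            simp only [Matrix.mul_assoc]
        _ = ((U * D) * (1 * D)) * V := by rw [hUU']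
        _ = U * (D * D) * V := by simp only [Matrix.one_mul, Matrix.mul_assoc]
    have hDD : D * D = Matrix.diagonal (fun i => hGH.eigenvalues i ^ 2) := by
      rw [hDD', Matrix.diagonal_mul_diagonal]
      congr 1
      funext i
      simp [pow_two]
    have hone : r ^ 2 • (1 : Matrix (Fin p) (Fin p) ℝ)
        = U * Matrix.diagonal (fun _ : Fin p => r ^ 2) * V := by
      have h2 : U * Matrix.diagonal (fun _ : Fin p => r ^ 2) * V
          = r ^ 2 • (1 : Matrix (Fin p) (Fin p) ℝ) := by
        calc U * Matrix.diagonal (fun _ : Fin p => r ^ 2) * V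
            = U * (r ^ 2 • (1 : Matrix (Fin p) (Fin p) ℝ)) * V := by
              rw [Matrix.smul_one_eq_diagonal]
          _ = r ^ 2 • (U * 1 * V) := by rw [Matrix.mul_smul, Matrix.smul_mul]
          _ = r ^ 2 • (1 : Matrix (Fin p) (Fin p) ℝ) := by rw [Matrix.mul_one, hUU]
      exact h2.symm
    have hdiag : r ^ 2 • (1 : Matrix (Fin p) (Fin p) ℝ) - G * G
        = U * Matrix.diagonal (fun i => r ^ 2 - hGH.eigenvalues i ^ 2) * V := by
      rw [hone, h1, hDD, ← Matrix.sub_mul, ← Matrix.mul_sub, Matrix.diagonal_sub]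
    rw [hdiag]
    have hd : (Matrix.diagonal fun i => r ^ 2 - hGH.eigenvalues i ^ 2).PosSemidef :=
      Matrix.posSemidef_diagonal_iff.mpr fun i => by
        nlinarith [hev i, abs_nonneg (hGH.eigenvalues i), sq_abs (hGH.eigenvalues i)]
    have h3 := hd.mul_mul_conjTranspose_same U
    simpa [hV, Matrix.star_eq_conjTranspose] using h3
  have hGnorm : ∀ z : Fin p → ℝ, (G *ᵥ z) ⬝ᵥ (G *ᵥ z) ≤ r ^ 2 * (z ⬝ᵥ z) := by
    intro z
    have h0 := hPsd.dotProduct_mulVec_nonneg z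
    rw [star_trivial] at h0
    have hexp : z ⬝ᵥ (r ^ 2 • (1 : Matrix (Fin p) (Fin p) ℝ) - G * G) *ᵥ z
        = r ^ 2 * (z ⬝ᵥ z) - (G *ᵥ z) ⬝ᵥ (G *ᵥ z) := by
      rw [Matrix.sub_mulVec, dotProduct_sub]
      congr 1
      · rw [Matrix.smul_mulVec, Matrix.one_mulVec, dotProduct_smul, smul_eq_mul]
      · rw [← Matrix.mulVec_mulVec, Matrix.dotProduct_mulVec]
        congr 1
        have hGt : Gᵀ = G := by
          have h : Gᴴ = G := hGH
          rwa [Matrix.conjTranspose_eq_transpose_of_trivial] at h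
        conv_lhs => rw [← hGt]
        exact Matrix.vecMul_transpose _ _
    rw [hexp] at h0
    linarith
  -- the matrix K = A₀ * S is positive definite
  set K : Matrix (Fin p) (Fin p) ℝ := A₀ * S with hK
  have hKeq : K = (∑ i, a i ^ 2 • (A₀ * M' i)) - f'ᵀ * A₀ * f' := by
    rw [hK, hS, Matrix.mul_sub, Finset.mul_sum]
    congr 1
    · exact Finset.sum_congr rfl fun i _ => Matrix.mul_smul _ _ _
    · rw [pow_two, ← Matrix.mul_assoc, ← hfA]
  clear_value K
  have hAq : ∀ w : Fin p → ℝ, w ⬝ᵥ A₀ *ᵥ w = (B *ᵥ w) ⬝ᵥ (B *ᵥ w) := by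
    intro w
    rw [← hBB, ← Matrix.mulVec_mulVec, Matrix.dotProduct_mulVec]
    congr 1
    conv_lhs => rw [← hBt]
    exact Matrix.vecMul_transpose _ _
  have hquad : ∀ z : Fin p → ℝ, z ⬝ᵥ (f'ᵀ * A₀ * f') *ᵥ z
      = (f' *ᵥ z) ⬝ᵥ A₀ *ᵥ (f' *ᵥ z) := by
    intro z
    rw [← Matrix.mulVec_mulVec, ← Matrix.mulVec_mulVec, Matrix.dotProduct_mulVec]
    congr 1
    exact Matrix.vecMul_transpose _ _
  set m := Finset.univ.inf' Finset.univ_nonempty (fun i => |a i|) with hm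
  have hmr : r < m := (Finset.lt_inf'_iff _).mpr fun i _ => hsub i
  have hKP : K.PosDef := by
    refine Matrix.PosDef.of_dotProduct_mulVec_pos ?_ ?_
    · show Kᴴ = K
      rw [Matrix.conjTranspose_eq_transpose_of_trivial, hKeq,
        Matrix.transpose_sub, Matrix.transpose_sum]
      congr 1
      · refine Finset.sum_congr rfl fun i _ => ?_
        rw [Matrix.transpose_smul]
        congr 1
        have h : (A₀ * M' i)ᴴ = A₀ * M' i := (hM i).1
        rwa [Matrix.conjTranspose_eq_transpose_of_trivial] at h
      · rw [Matrix.transpose_mul, Matrix.transpose_mul, Matrix.transpose_transpose, hAt]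
        exact (Matrix.mul_assoc _ _ _).symm
    · intro z hz
      rw [star_trivial]
      set w := B *ᵥ z with hw
      clear_value w
      have hwz : w ≠ 0 := by
        intro h
        apply hz
        have h1 : B⁻¹ *ᵥ (B *ᵥ z) = z := by
          rw [Matrix.mulVec_mulVec, hBiB, Matrix.one_mulVec]
        rw [← h1, ← hw, h, Matrix.mulVec_zero]
      have hGw : G *ᵥ w = B *ᵥ (f' *ᵥ z) := by
        rw [hw, Matrix.mulVec_mulVec, hGB, ← Matrix.mulVec_mulVec]
      have hsplit : z ⬝ᵥ K *ᵥ z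
          = (∑ i, a i ^ 2 * (z ⬝ᵥ (A₀ * M' i) *ᵥ z)) - (G *ᵥ w) ⬝ᵥ (G *ᵥ w) := by
        rw [hKeq, Matrix.sub_mulVec, dotProduct_sub]
        congr 1
        · rw [sumMulVec, dotProductSum]
          refine Finset.sum_congr rfl fun i _ => ?_
          rw [Matrix.smul_mulVec, dotProduct_smul, smul_eq_mul]
        · rw [hquad, hGw, ← hAq]
      have hq0 : ∀ i, 0 ≤ z ⬝ᵥ (A₀ * M' i) *ᵥ z := by
        intro i
        have h := (hM i).posSemidef.dotProduct_mulVec_nonneg z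
        rwa [star_trivial] at h
      have hterm1 : ∀ i ∈ Finset.univ, m ^ 2 * (z ⬝ᵥ (A₀ * M' i) *ᵥ z)
          ≤ a i ^ 2 * (z ⬝ᵥ (A₀ * M' i) *ᵥ z) := by
        intro i _
        have h1 : m ≤ |a i| := Finset.inf'_le _ (Finset.mem_univ i)
        have h2 : m ^ 2 ≤ a i ^ 2 := by nlinarith [sq_abs (a i), hr0, hmr]
        nlinarith [hq0 i]
      have hsumq : ∑ i, z ⬝ᵥ (A₀ * M' i) *ᵥ z = z ⬝ᵥ A₀ *ᵥ z := by
        rw [← dotProductSum, ← sumMulVec, ← Finset.mul_sum, hsum, Matrix.mul_one]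
      have h1 : m ^ 2 * (w ⬝ᵥ w) ≤ ∑ i, a i ^ 2 * (z ⬝ᵥ (A₀ * M' i) *ᵥ z) := by
        have h2 := Finset.sum_le_sum hterm1
        rw [← Finset.mul_sum, hsumq, hAq, ← hw] at h2
        exact h2
      have h2 : (G *ᵥ w) ⬝ᵥ (G *ᵥ w) ≤ r ^ 2 * (w ⬝ᵥ w) := hGnorm w
      have h3 : 0 < w ⬝ᵥ w := by
        have h4 : (0 : ℝ) < star w ⬝ᵥ w := Matrix.dotProduct_star_self_pos_iff.mpr hwz
        rwa [star_trivial] at h4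
      rw [hsplit]
      nlinarith [h1, h2, h3, hmr, hr0,
        mul_pos (mul_pos (sub_pos.mpr hmr) (by linarith : (0:ℝ) < m + r)) h3]
  -- complex spectral argument
  have hspec : ∀ μ ∈ spectrum ℂ (S.map (algebraMap ℝ ℂ)), μ.im = 0 ∧ 0 < μ.re := by
    intro μ hμ
    rw [spectrum.mem_iff] at hμ
    have hdet : (algebraMap ℂ (Matrix (Fin p) (Fin p) ℂ) μ - S.map (algebraMap ℝ ℂ)).det = 0 := by
      by_contra h
      exact hμ ((Matrix.isUnit_iff_isUnit_det _).2 (isUnit_iff_ne_zero.2 h))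
    obtain ⟨v, hv0, hv⟩ := Matrix.exists_mulVec_eq_zero_iff.mpr hdet
    have hNv : (S.map (algebraMap ℝ ℂ)) *ᵥ v = μ • v := by
      rw [Matrix.sub_mulVec] at hv
      have h2 : algebraMap ℂ (Matrix (Fin p) (Fin p) ℂ) μ *ᵥ v = μ • v := by
        rw [Algebra.algebraMap_eq_smul_one, Matrix.smul_mulVec, Matrix.one_mulVec]
      rw [h2] at hv
      exact (sub_eq_zero.mp hv).symm
    have hKv : (K.map (algebraMap ℝ ℂ)) *ᵥ v = μ • ((A₀.map (algebraMap ℝ ℂ)) *ᵥ v) := by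
      rw [hK, hmapmul, ← Matrix.mulVec_mulVec, hNv, Matrix.mulVec_smul]
    obtain ⟨hAim, hApos⟩ := auxPos hA v hv0
    obtain ⟨hKim, hKpos⟩ := auxPos hKP v hv0
    have hβα : star v ⬝ᵥ (K.map (algebraMap ℝ ℂ)) *ᵥ v
        = μ * (star v ⬝ᵥ (A₀.map (algebraMap ℝ ℂ)) *ᵥ v) := by
      rw [hKv, dotProduct_smul, smul_eq_mul]
    have him : μ.im = 0 := by
      have hb : (star v ⬝ᵥ (K.map (algebraMap ℝ ℂ)) *ᵥ v).im
          = μ.im * (star v ⬝ᵥ (A₀.map (algebraMap ℝ ℂ)) *ᵥ v).re := by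
        rw [hβα, Complex.mul_im, hAim]
        ring
      rw [hKim] at hb
      have := hb.symm
      rcases mul_eq_zero.mp this with h | h
      · exact h
      · exact absurd h (ne_of_gt hApos)
    have hrr : (star v ⬝ᵥ (K.map (algebraMap ℝ ℂ)) *ᵥ v).re
        = μ.re * (star v ⬝ᵥ (A₀.map (algebraMap ℝ ℂ)) *ᵥ v).re := by
      rw [hβα, Complex.mul_re, hAim, him]
      ring
    refine ⟨him, ?_⟩
    have hKpos' := hKpos
    rw [hrr] at hKpos'
    by_contra hc
    push_neg at hc
    have h5 : μ.re * (star v ⬝ᵥ (A₀.map (algebraMap ℝ ℂ)) *ᵥ v).re ≤ 0 :=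
      mul_nonpos_iff.mpr (Or.inr ⟨hc, hApos.le⟩)
    linarith
  refine ⟨hspec, ?_⟩
  have h0 : (0 : ℂ) ∉ spectrum ℂ (S.map (algebraMap ℝ ℂ)) := by
    intro h
    have := (hspec 0 h).2
    simp at this
  have hUc : IsUnit (S.map (algebraMap ℝ ℂ)) := (spectrum.zero_notMem_iff (R := ℂ)).mp h0
  rw [Matrix.isUnit_iff_isUnit_det, isUnit_iff_ne_zero]
  intro hdet0
  rw [Matrix.isUnit_iff_isUnit_det, ← RingHom.mapMatrix_apply, ← RingHom.map_det, hdet0,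
    map_zero] at hUc
  exact (isUnit_iff_ne_zero.mp hUc) rfl
end

section
/- The polynomial stability function G(z) = 1 + z + z²/2 satisfies: for z = −λ·(1 − e^{−iθ}) with λ > 0 (upwind symbol), |G(z)| ≤ 1 for all θ ∈ ℝ if and only if λ ≤ 1. -/
private lemma abs_le_one_iff_normSq (z : ℂ) :
    ‖z‖ ≤ 1 ↔ Complex.normSq z ≤ 1 := by
  constructor
  · intro h
    nlinarith [Complex.sq_norm z, norm_nonneg z]
  · intro h
    nlinarith [Complex.sq_norm z, norm_nonneg z]

private lemma exp_neg_theta (θ : ℝ) :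
    Complex.exp (-(θ : ℂ) * Complex.I)
      = Complex.ofReal (Real.cos θ) - Complex.ofReal (Real.sin θ) * Complex.I := by
  have h : -(θ : ℂ) * Complex.I = ((-θ : ℝ) : ℂ) * Complex.I := by push_cast; ring
  rw [h, Complex.exp_mul_I, ← Complex.ofReal_cos, ← Complex.ofReal_sin]
  push_cast [Real.cos_neg, Real.sin_neg]
  ring

/-- The DeC stability function `G(z) = 1 + z + z²/2` combined with the upwind
symbol `z = -λ(1 - e^{-iθ})`, `λ > 0`, satisfies `|G(z)| ≤ 1` for all `θ` iff
`λ ≤ 1`. -/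
theorem stmt17 (lam : ℝ) (hlam : 0 < lam) :
    (∀ θ : ℝ,
      ‖1 + (-(lam : ℂ) * (1 - Complex.exp (-(θ : ℂ) * Complex.I)))
        + (-(lam : ℂ) * (1 - Complex.exp (-(θ : ℂ) * Complex.I))) ^ 2 / 2‖ ≤ 1)
      ↔ lam ≤ 1 := by
  constructor
  · intro h
    have hπ := h Real.pi
    rw [exp_neg_theta, abs_le_one_iff_normSq] at hπ
    simp only [Real.cos_pi, Real.sin_pi] at hπ
    have hre : (1 + (-(lam : ℂ) * (1 - (Complex.ofReal (-1) - Complex.ofReal 0 * Complex.I)))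
        + (-(lam : ℂ) * (1 - (Complex.ofReal (-1) - Complex.ofReal 0 * Complex.I))) ^ 2 / 2)
        = Complex.ofReal (1 - 2*lam + 2*lam^2) := by
      push_cast; ring
    rw [hre, Complex.normSq_ofReal] at hπ
    by_contra hgt
    push_neg at hgt
    nlinarith [mul_pos hlam (by linarith : (0:ℝ) < lam - 1),
      sq_nonneg (2*lam^2 - 2*lam)]
  · intro hle θ
    rw [exp_neg_theta, abs_le_one_iff_normSq]
    set c := Real.cos θ with hc
    set s := Real.sin θ with hs
    have hcs : s ^ 2 + c ^ 2 = 1 := Real.sin_sq_add_cos_sq θ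
    have heq : (1 + (-(lam : ℂ) * (1 - (Complex.ofReal c - Complex.ofReal s * Complex.I)))
        + (-(lam : ℂ) * (1 - (Complex.ofReal c - Complex.ofReal s * Complex.I))) ^ 2 / 2)
        = Complex.ofReal (1 - lam*(1-c) + lam^2*((1-c)^2 - s^2)/2)
          + Complex.ofReal (-lam*s + lam^2*(1-c)*s) * Complex.I := by
      push_cast; ring_nf
      rw [Complex.I_sq]
      ring
    rw [heq, Complex.normSq_add_mul_I]
    have hc1 : c ≤ 1 := Real.cos_le_one θ
    have hc2 : -1 ≤ c := Real.neg_one_le_cos θ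
    -- p = lam*(lam^2-2*lam+2), u = 1-c
    have hp0 : 0 ≤ lam*(lam^2 - 2*lam + 2) := by nlinarith [sq_nonneg (lam - 1)]
    have hp1 : lam*(lam^2 - 2*lam + 2) ≤ 1 := by
      nlinarith [mul_nonneg (by linarith : (0:ℝ) ≤ 1 - lam) (sq_nonneg (2*lam - 1))]
    have hup : (1-c)*(lam*(lam^2 - 2*lam + 2)) ≤ 2 := by
      nlinarith [mul_nonneg (by linarith : (0:ℝ) ≤ 1 + c) hp0]
    have key : (1 - lam*(1-c) + lam^2*((1-c)^2 - s^2)/2)^2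
        + (-lam*s + lam^2*(1-c)*s)^2 - 1
        = lam*(1-c)*((1-c)*(lam*(lam^2 - 2*lam + 2)) - 2) := by
      linear_combination (lam^4*s^2/4 - lam^3 + lam^3*c + 3*lam^4/4 - lam^4*c
        + lam^4*c^2/4) * hcs
    nlinarith [mul_nonneg (mul_nonneg hlam.le (by linarith : (0:ℝ) ≤ 1 - c))
      (by linarith : (0:ℝ) ≤ 2 - (1-c)*(lam*(lam^2 - 2*lam + 2)))]
end
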